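/- For every positive integer r, the quantity 2 \cdot r^{-3} \sum_{d | r} \mu(r/d) \binom{3d-1}{d-1} is an integer; i.e., r^3 divides 2 \sum_{d | r} \mu(r/d) \binom{3d-1}{d-1}. -/

import Mathlib

open Finset


lemma expand {R : Type*} [CommRing R] (c : R) (hc : c^3 = 0) {ι : Type*} (s : Finset ι)
    (x : ι → R) :
    ∃ E : R, ∏ j ∈ s, (1 + c * x j) = 1 + c * (∑ j ∈ s, x j) + c^2 * E ∧
      2 * E = (∑ j ∈ s, x j)^2 - ∑ j ∈ s, (x j)^2 := by
  classical
  induction s using Finset.induction with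
  | empty => exact ⟨0, by simp, by simp⟩
  | insert _ _ ha ih =>
    rename_i a s'
    obtain ⟨E, hE1, hE2⟩ := ih
    refine ⟨E + (∑ j ∈ s', x j) * x a, ?_, ?_⟩
    · rw [Finset.prod_insert ha, Finset.sum_insert ha, hE1]
      linear_combination (E * x a) * hc
    · rw [Finset.sum_insert ha, Finset.sum_insert ha]
      linear_combination hE2


-- ascending product
lemma asc_prod (m : ℕ) : ∀ t : ℕ, Nat.factorial m * ∏ j ∈ Ico 1 (t+1), (m + j) = Nat.factorial (m + t)
  | 0 => by simp
  | (t+1) => by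
    rw [Finset.prod_Ico_succ_top (by omega), ← mul_assoc, asc_prod m t]
    rw [show m + (t+1) = (m+t) + 1 from rfl, Nat.factorial_succ, mul_comm]

lemma choose_prod (N : ℕ) (hN : 0 < N) :
    Nat.choose (3*N-1) (N-1) * Nat.factorial (N-1) = ∏ j ∈ Ico 1 N, (2*N + j) := by
  have h1 : Nat.factorial (2*N) * ∏ j ∈ Ico 1 N, (2*N + j) = Nat.factorial (3*N-1) := by
    have := asc_prod (2*N) (N-1)
    rw [show N - 1 + 1 = N by omega] at this
    rw [this]; congr 1; omega
  have h2 := Nat.choose_mul_factorial_mul_factorial (n := 3*N-1) (k := N-1) (by omega)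
  have h3 : 3*N-1 - (N-1) = 2*N := by omega
  rw [h3] at h2
  apply Nat.eq_of_mul_eq_mul_left (Nat.factorial_pos (2*N))
  rw [h1, ← h2]; ring

lemma prod_split (p n : ℕ) (hp : 0 < p) (g : ℕ → ℕ) :
    ∏ j ∈ Ico 1 (p*n), g j =
      (∏ j ∈ (Ico 1 (p*n)).filter (fun j => ¬ p ∣ j), g j) * ∏ j' ∈ Ico 1 n, g (p * j') := by
  rw [← Finset.prod_filter_mul_prod_filter_not (Ico 1 (p*n)) (fun j => ¬ p ∣ j) g]
  congr 1
  apply Finset.prod_nbij' (fun j => j / p) (fun j' => p * j')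
  · intro a ha
    simp only [mem_filter, mem_Ico, not_not] at ha
    obtain ⟨⟨h1, h2⟩, ⟨c, rfl⟩⟩ := ha
    have hc1 : 1 ≤ c := by by_contra h; interval_cases c <;> omega
    have hc2 : c < n := by
      by_contra h
      exact absurd h2 (by push_neg; exact Nat.mul_le_mul_left p (by omega))
    simp only [mem_Ico, Nat.mul_div_cancel_left c hp]
    exact ⟨hc1, hc2⟩
  · intro a ha
    simp only [mem_Ico] at ha
    simp only [mem_filter, mem_Ico, not_not]
    exact ⟨⟨by nlinarith [ha.1], by have := ha.2; exact (Nat.mul_lt_mul_left hp).mpr this⟩, ⟨a, rfl⟩⟩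
  · intro a ha
    simp only [mem_filter, mem_Ico, not_not] at ha
    obtain ⟨⟨h1, h2⟩, ⟨c, rfl⟩⟩ := ha
    rw [Nat.mul_div_cancel_left c hp]
  · intro a ha
    rw [Nat.mul_div_cancel_left a hp]
  · intro a ha
    simp only [mem_filter, mem_Ico, not_not] at ha
    obtain ⟨⟨h1, h2⟩, ⟨c, rfl⟩⟩ := ha
    rw [Nat.mul_div_cancel_left c hp]

lemma keyNat (p n : ℕ) (hp : 2 ≤ p) (hn : 0 < n) :
    Nat.choose (3*(p*n)-1) (p*n-1) * ∏ j ∈ (Ico 1 (p*n)).filter (fun j => ¬ p ∣ j), j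
    = Nat.choose (3*n-1) (n-1) * ∏ j ∈ (Ico 1 (p*n)).filter (fun j => ¬ p ∣ j), (2*(p*n) + j) := by
  set N := p * n with hN
  have hp0 : 0 < p := by omega
  have hN0 : 0 < N := by positivity
  -- factorial split
  have hfac : Nat.factorial (N-1) =
      (∏ j ∈ (Ico 1 N).filter (fun j => ¬ p ∣ j), j) * (p^(n-1) * Nat.factorial (n-1)) := by
    have h0 : ∏ j ∈ Ico 1 N, j = Nat.factorial (N-1) := by
      have := Finset.prod_Ico_id_eq_factorial (N-1)
      rw [show N - 1 + 1 = N by omega] at this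
      exact this
    rw [← h0, hN, prod_split p n hp0 (fun j => j)]
    congr 1
    rw [Finset.prod_mul_distrib, Finset.prod_const, Nat.card_Ico]
    congr 1
    have := Finset.prod_Ico_id_eq_factorial (n-1)
    rw [show n - 1 + 1 = n by omega] at this
    exact this
  have hprod : ∏ j ∈ Ico 1 N, (2*N + j) =
      (∏ j ∈ (Ico 1 N).filter (fun j => ¬ p ∣ j), (2*N + j)) *
        (p^(n-1) * ∏ j' ∈ Ico 1 n, (2*n + j')) := by
    rw [prod_split p n hp0 (fun j => 2*N + j)]
    congr 1
    have : ∀ j', 2*N + p * j' = p * (2*n + j') := by intro j'; rw [hN]; ring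
    rw [Finset.prod_congr rfl (fun j' _ => this j'), Finset.prod_mul_distrib,
      Finset.prod_const, Nat.card_Ico]
  have h1 := choose_prod N hN0
  have h2 := choose_prod n hn
  rw [hfac, hprod, ← h2] at h1
  -- h1 : C_N * (B * (p^(n-1) * (n-1)!)) = A * (p^(n-1) * (C_n * (n-1)!))
  apply Nat.eq_of_mul_eq_mul_right (show 0 < p^(n-1) * Nat.factorial (n-1) by positivity)
  calc Nat.choose (3*N-1) (N-1) * (∏ j ∈ (Ico 1 N).filter (fun j => ¬ p ∣ j), j) *
        (p^(n-1) * Nat.factorial (n-1))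
      = Nat.choose (3*N-1) (N-1) * ((∏ j ∈ (Ico 1 N).filter (fun j => ¬ p ∣ j), j) *
        (p^(n-1) * Nat.factorial (n-1))) := by ring
    _ = (∏ j ∈ (Ico 1 N).filter (fun j => ¬ p ∣ j), (2*N + j)) *
        (p^(n-1) * (Nat.choose (3*n-1) (n-1) * Nat.factorial (n-1))) := h1
    _ = _ := by ring


lemma periodic_shift {M : Type*} (F : ℕ → M) (q : ℕ) (hF : ∀ j, F (j + q) = F j) :
    ∀ t x, F (x + t * q) = F x := by
  intro t
  induction t with
  | zero => simp
  | succ t ih => intro x; rw [show x + (t+1)*q = (x + t*q) + q by ring, hF, ih]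

lemma periodic_sum {M : Type*} [AddCommMonoid M] (q : ℕ) (F : ℕ → M)
    (hF : ∀ j, F (j + q) = F j) : ∀ c, ∑ j ∈ range (c*q), F j = c • ∑ j ∈ range q, F j := by
  intro c
  induction c with
  | zero => simp
  | succ c ih =>
    rw [show (c+1)*q = c*q + q by ring, Finset.sum_range_add, ih, succ_nsmul]
    congr 1
    exact Finset.sum_congr rfl fun x _ => by rw [add_comm (c*q) x, periodic_shift F q hF]

lemma kill {u v : ℕ} [NeZero (u*v)] (x : ZMod (u*v))
    (h : ZMod.castHom (dvd_mul_left v u) (ZMod v) x = 0) : (u : ZMod (u*v)) * x = 0 := by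
  haveI : NeZero v := ⟨fun hv => (NeZero.ne (u*v)) (by rw [hv, mul_zero])⟩
  have hval : v ∣ x.val := by
    rw [ZMod.castHom_apply, ← ZMod.natCast_val] at h
    exact (ZMod.natCast_eq_zero_iff _ _).mp h
  have hx : ((x.val : ℕ) : ZMod (u*v)) = x := ZMod.natCast_rightInverse x
  calc (u : ZMod (u*v)) * x = ((u * x.val : ℕ) : ZMod (u*v)) := by push_cast; rw [hx]
    _ = 0 := (ZMod.natCast_eq_zero_iff _ _).mpr (mul_dvd_mul_left u hval)

lemma hom_inv {n m : ℕ} (f : ZMod n →+* ZMod m) (j : ℕ) (h : IsUnit ((j : ZMod n)))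
    (hm : IsUnit ((j : ZMod m))) : f ((j : ZMod n)⁻¹) = ((j : ZMod m))⁻¹ := by
  have h1 : (j : ZMod n) * (j : ZMod n)⁻¹ = 1 := ZMod.mul_inv_of_unit _ h
  have h2 := congrArg f h1
  rw [map_mul, map_one, map_natCast] at h2
  have h3 : (j : ZMod m) * (j : ZMod m)⁻¹ = 1 := ZMod.mul_inv_of_unit _ hm
  exact hm.mul_left_cancel (h2.trans h3.symm)

lemma isUnit_cast {p : ℕ} (hp : p.Prime) (t j : ℕ) (hj : ¬ p ∣ j) :
    IsUnit ((j : ZMod (p^t))) := by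
  haveI : NeZero (p^t) := ⟨pow_ne_zero t hp.ne_zero⟩
  rw [ZMod.isUnit_iff_coprime]
  exact Nat.Coprime.pow_right t ((hp.coprime_iff_not_dvd.mpr hj).symm)

lemma sum_units_eq {p t : ℕ} (hp : p.Prime) [NeZero (p^t)] (ht : 1 ≤ t) {M : Type*}
    [AddCommMonoid M] (g : ZMod (p^t) → M) :
    ∑ u : (ZMod (p^t))ˣ, g ↑u
      = ∑ v ∈ (range (p^t)).filter (fun v => ¬ p ∣ v), g (v : ZMod (p^t)) := by
  refine Finset.sum_bij' (fun (u : (ZMod (p^t))ˣ) (_ : u ∈ Finset.univ) => ((u : ZMod (p^t)).val))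
    (fun v hv => ZMod.unitOfCoprime v (by
      simp only [mem_filter, mem_range] at hv
      exact Nat.Coprime.pow_right t ((hp.coprime_iff_not_dvd.mpr hv.2).symm)))
    ?_ ?_ ?_ ?_ ?_
  · intro u _
    simp only [mem_filter, mem_range]
    refine ⟨ZMod.val_lt _, fun hdvd => ?_⟩
    have hcop : Nat.gcd ((u : ZMod (p^t)).val) (p^t) = 1 := ZMod.val_coe_unit_coprime u
    have hd : p ∣ Nat.gcd ((u : ZMod (p^t)).val) (p^t) :=
      Nat.dvd_gcd hdvd (dvd_pow_self p (by omega))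
    rw [hcop] at hd
    have := Nat.le_of_dvd one_pos hd
    have := hp.two_le
    omega
  · intro v hv; exact Finset.mem_univ _
  · intro u _
    apply Units.ext
    simp only [ZMod.coe_unitOfCoprime]
    rw [ZMod.natCast_val, ZMod.cast_id]
  · intro v hv
    simp only [mem_filter, mem_range] at hv
    simp only [ZMod.coe_unitOfCoprime]
    exact ZMod.val_natCast_of_lt hv.1
  · intro u _
    congr 1
    rw [ZMod.natCast_val, ZMod.cast_id]

lemma V_odd {p t : ℕ} (hp : p.Prime) (hodd : p ≠ 2) [NeZero (p^t)] :
    (3 : ZMod (p^t)) * ∑ u : (ZMod (p^t))ˣ, ((u : ZMod (p^t)))^2 = 0 := by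
  have hcop : Nat.Coprime 2 (p^t) := Nat.Coprime.pow_right t
    ((Nat.prime_two.coprime_iff_not_dvd).mpr
      (fun h => hodd ((Nat.prime_dvd_prime_iff_eq Nat.prime_two hp).mp h).symm))
  set c := ZMod.unitOfCoprime 2 hcop with hc
  set V := ∑ u : (ZMod (p^t))ˣ, ((u : ZMod (p^t)))^2 with hV
  have h4 : (4 : ZMod (p^t)) * V = V := by
    calc (4 : ZMod (p^t)) * V = ∑ u : (ZMod (p^t))ˣ, ((c*u : (ZMod (p^t))ˣ) : ZMod (p^t))^2 := by
          rw [Finset.mul_sum]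
          refine Finset.sum_congr rfl fun u _ => ?_
          push_cast [Units.val_mul, hc, ZMod.coe_unitOfCoprime]
          ring
      _ = V := Fintype.sum_bijective (fun u => c*u) (Group.mulLeft_bijective c) _ _ (fun u => rfl)
  linear_combination h4

lemma sq_sum : ∀ n : ℕ, 6 * ∑ j ∈ range (n+1), j^2 = n*(n+1)*(2*n+1)
  | 0 => by simp
  | (n+1) => by
    rw [Finset.sum_range_succ, Nat.mul_add, sq_sum n]; ring

lemma even_sq_sum (m : ℕ) :
    ∑ j ∈ (range (2*m)).filter (fun j => 2 ∣ j), j^2 = 4 * ∑ i ∈ range m, i^2 := by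
  rw [Finset.mul_sum]
  refine Finset.sum_bij' (fun j _ => j / 2) (fun i _ => 2 * i) ?_ ?_ ?_ ?_ ?_
  · intro a ha
    simp only [mem_filter, mem_range] at ha
    obtain ⟨h1, c, rfl⟩ := ha
    simpa [Nat.mul_div_cancel_left c (by norm_num : 0 < 2), mem_range] using by omega
  · intro i hi
    simp only [mem_range] at hi
    simp only [mem_filter, mem_range]
    exact ⟨by omega, ⟨i, rfl⟩⟩
  · intro a ha
    simp only [mem_filter, mem_range] at ha
    obtain ⟨h1, c, rfl⟩ := ha
    rw [Nat.mul_div_cancel_left c (by norm_num : 0 < 2)]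
  · intro i _
    rw [Nat.mul_div_cancel_left i (by norm_num : 0 < 2)]
  · intro a ha
    simp only [mem_filter, mem_range] at ha
    obtain ⟨h1, c, rfl⟩ := ha
    rw [Nat.mul_div_cancel_left c (by norm_num : 0 < 2)]
    ring

lemma odd_sq_sum_dvd (t : ℕ) (ht : 1 ≤ t) :
    (2:ℕ)^t ∣ 2 * ∑ v ∈ (range (2^t)).filter (fun v => ¬ 2 ∣ v), v^2 := by
  set W := ∑ v ∈ (range (2^t)).filter (fun v => ¬ 2 ∣ v), v^2 with hW
  have hsplit := Finset.sum_filter_add_sum_filter_not (range (2^t)) (fun j => 2 ∣ j) (fun j => j^2)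
  have h2t : 2^t = 2 * 2^(t-1) := by
    rw [← pow_succ']; congr 1; omega
  have heven : ∑ j ∈ (range (2^t)).filter (fun j => 2 ∣ j), j^2
      = 4 * ∑ i ∈ range (2^(t-1)), i^2 := by
    rw [h2t]; exact even_sq_sum _
  -- 6 * total
  have htot : 6 * ∑ j ∈ range (2^t), j^2 = (2^t - 1)*(2^t)*(2*(2^t-1)+1) := by
    have := sq_sum (2^t - 1)
    rw [show 2^t - 1 + 1 = 2^t by have := Nat.one_le_two_pow (n := t); omega] at this
    exact this
  have hA1 : 6 * ∑ i ∈ range (2^(t-1)), i^2 = (2^(t-1) - 1)*(2^(t-1))*(2*(2^(t-1)-1)+1) := by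
    have := sq_sum (2^(t-1) - 1)
    rw [show 2^(t-1) - 1 + 1 = 2^(t-1) by have := Nat.one_le_two_pow (n := t-1); omega] at this
    exact this
  have hdvd1 : (2:ℕ)^t ∣ 6 * ∑ j ∈ range (2^t), j^2 := by
    rw [htot]; exact Dvd.dvd.mul_right (Dvd.dvd.mul_left dvd_rfl _) _
  have hdvd2 : (2:ℕ)^t ∣ 6 * (4 * ∑ i ∈ range (2^(t-1)), i^2) := by
    have : 6 * (4 * ∑ i ∈ range (2^(t-1)), i^2) = 4 * (6 * ∑ i ∈ range (2^(t-1)), i^2) := by ring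
    rw [this, hA1, h2t]
    have : 2 * 2^(t-1) ∣ 4 * 2^(t-1) := by
      apply mul_dvd_mul _ dvd_rfl; norm_num
    calc 2 * 2^(t-1) ∣ 4 * 2^(t-1) := this
      _ ∣ 4 * ((2^(t-1) - 1)*(2^(t-1))*(2*(2^(t-1)-1)+1)) := by
          apply mul_dvd_mul dvd_rfl
          exact Dvd.dvd.mul_right (Dvd.dvd.mul_left dvd_rfl _) _
  have h6W : (2:ℕ)^t ∣ 6 * W := by
    have heq : 6 * W = 6 * ∑ j ∈ range (2^t), j^2 - 6 * (4 * ∑ i ∈ range (2^(t-1)), i^2) := by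
      rw [← heven]; omega
    rw [heq]
    exact Nat.dvd_sub hdvd1 hdvd2
  have : 6 * W = (2 * W) * 3 := by ring
  rw [this] at h6W
  exact (Nat.Coprime.dvd_of_dvd_mul_right (Nat.Coprime.pow_left t (by norm_num)) h6W)

lemma V_two (t : ℕ) [NeZero ((2:ℕ)^t)] :
    (2 : ZMod (2^t)) * ∑ u : (ZMod (2^t))ˣ, ((u : ZMod (2^t)))^2 = 0 := by
  rcases Nat.eq_zero_or_pos t with rfl | ht
  · haveI : Subsingleton (ZMod (2^0)) := inferInstanceAs (Subsingleton (ZMod 1))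
    exact Subsingleton.elim _ _
  rw [sum_units_eq Nat.prime_two ht (fun x => x^2)]
  have : (2 : ZMod (2^t)) * ∑ v ∈ (range (2^t)).filter (fun v => ¬ 2 ∣ v), ((v : ZMod (2^t)))^2
      = ((2 * ∑ v ∈ (range (2^t)).filter (fun v => ¬ 2 ∣ v), v^2 : ℕ) : ZMod (2^t)) := by
    push_cast
    ring
  rw [this]
  exact (ZMod.natCast_eq_zero_iff _ _).mpr (odd_sq_sum_dvd t ht)

section XX
variable {p k e κ : ℕ}

lemma core [NeZero (p^κ)] (hp : p.Prime) (hk : 1 ≤ k) (he : 0 < e) (hκ : κ ≤ k)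
    (hV : ((3 * (p^(k-κ) * e) : ℕ) : ZMod (p^κ)) *
        (∑ u : (ZMod (p^κ))ˣ, ((u : ZMod (p^κ)))^2) = 0) :
    ((p:ℤ)^(2*k)*(p:ℤ)^κ) ∣ ((Nat.choose (3*(p^k*e)-1) (p^k*e-1) : ℤ)
      - (Nat.choose (3*(p^(k-1)*e)-1) (p^(k-1)*e-1) : ℤ)) := by
  have hp2 := hp.two_le
  set n := p^(k-1)*e with hn
  set N := p^k*e with hNdef
  have hn0 : 0 < n := by positivity
  have hNpn : N = p * n := by rw [hn, hNdef, ← mul_assoc, ← pow_succ']; congr 2; omega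
  have hN0 : 0 < N := by positivity
  set M := p^(2*k) * p^κ with hM
  haveI : NeZero M := ⟨by positivity⟩
  have hMdvd : M ∣ p^(3*k) := by
    rw [hM, ← pow_add]
    exact pow_dvd_pow p (by omega)
  set J := (range N).filter (fun j => ¬ p ∣ j) with hJ
  -- facts about members of J
  have hmem : ∀ j ∈ J, 1 ≤ j ∧ j < N ∧ ¬ p ∣ j := by
    intro j hj
    simp only [hJ, mem_filter, mem_range] at hj
    refine ⟨?_, hj.1, hj.2⟩
    rcases Nat.eq_zero_or_pos j with rfl | h
    · exact absurd (dvd_zero p) hj.2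
    · omega
  have hpN : p ∣ N := by
    rw [hNpn]; exact dvd_mul_right p n
  have hmemN : ∀ j ∈ J, (N - j) ∈ J := by
    intro j hj
    obtain ⟨h1, h2, h3⟩ := hmem j hj
    simp only [hJ, mem_filter, mem_range]
    refine ⟨by omega, fun hd => h3 ?_⟩
    have := Nat.dvd_sub hpN hd
    rwa [Nat.sub_sub_self (le_of_lt h2)] at this
  -- units
  have hunit : ∀ j, ¬ p ∣ j → IsUnit ((j : ZMod M)) := by
    intro j hjd
    have : IsUnit ((j : ZMod (p^(2*k+κ)))) := by
      haveI : NeZero (p^(2*k+κ)) := ⟨pow_ne_zero _ hp.ne_zero⟩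
      rw [ZMod.isUnit_iff_coprime]
      exact Nat.Coprime.pow_right _ ((hp.coprime_iff_not_dvd.mpr hjd).symm)
    rwa [show p^(2*k+κ) = M by rw [hM, pow_add]] at this
  -- N³ = 0
  have hN3 : ((N : ZMod M))^3 = 0 := by
    have : ((N^3 : ℕ) : ZMod M) = 0 := by
      rw [ZMod.natCast_eq_zero_iff]
      refine dvd_trans hMdvd ?_
      rw [hNdef, mul_pow, ← pow_mul]
      exact Dvd.dvd.mul_right (by rw [mul_comm 3 k]) _
    rw [← this]; push_cast; ring
  -- swap involution
  have hswap : ∀ f : ℕ → ZMod M, ∑ j ∈ J, f j = ∑ j ∈ J, f (N - j) := by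
    intro f
    refine Finset.sum_nbij' (fun j => N - j) (fun j => N - j) ?_ ?_ ?_ ?_ ?_
    · intro a ha; exact hmemN a ha
    · intro a ha; exact hmemN a ha
    · intro a ha; have := (hmem a ha).2.1; omega
    · intro a ha; have := (hmem a ha).2.1; omega
    · intro a ha; have := (hmem a ha).2.1; rw [Nat.sub_sub_self (by omega)]
  have hpair : ∀ j ∈ J, (((N - j : ℕ)) : ZMod M) = (N : ZMod M) - (j : ZMod M) := by
    intro j hj
    have := (hmem j hj).2.1
    push_cast [Nat.cast_sub (le_of_lt this)]
    ring
  set S1 := ∑ j ∈ J, ((j : ZMod M))⁻¹ with hS1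
  set S2 := ∑ j ∈ J, (((j : ZMod M))⁻¹)^2 with hS2
  set P := ∑ j ∈ J, ((j : ZMod M))⁻¹ * (((N - j : ℕ) : ZMod M))⁻¹ with hP
  set Q := ∑ j ∈ J, (((j : ZMod M))⁻¹)^2 * (((N - j : ℕ) : ZMod M))⁻¹ with hQ
  have hxinv : ∀ j ∈ J, ((j:ZMod M)) * ((j:ZMod M))⁻¹ = 1 := fun j hj =>
    ZMod.mul_inv_of_unit _ (hunit j (hmem j hj).2.2)
  have hyinv : ∀ j ∈ J, (((N - j : ℕ):ZMod M)) * (((N - j : ℕ):ZMod M))⁻¹ = 1 := fun j hj =>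
    ZMod.mul_inv_of_unit _ (hunit _ (hmem _ (hmemN j hj)).2.2)
  have h2S1 : 2 * S1 = (N : ZMod M) * P := by
    calc 2 * S1 = S1 + S1 := two_mul S1
      _ = ∑ j ∈ J, (((j : ZMod M))⁻¹ + (((N - j : ℕ)) : ZMod M)⁻¹) := by
          nth_rewrite 2 [hS1]
          rw [hswap (fun j => ((j : ZMod M))⁻¹), ← Finset.sum_add_distrib]
      _ = ∑ j ∈ J, (N : ZMod M) * (((j : ZMod M))⁻¹ * (((N - j : ℕ) : ZMod M))⁻¹) := by
          refine Finset.sum_congr rfl fun j hj => ?_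
          have hx := hxinv j hj
          have hy := hyinv j hj
          have hxy : (j:ZMod M) + ((N - j : ℕ):ZMod M) = (N:ZMod M) := by
            rw [hpair j hj]; ring
          linear_combination (((j:ZMod M))⁻¹ * (((N - j:ℕ):ZMod M))⁻¹) * hxy
            - (((N - j:ℕ):ZMod M))⁻¹ * hx - ((j:ZMod M))⁻¹ * hy
      _ = (N : ZMod M) * P := by rw [hP, Finset.mul_sum]
  have hPQ : P = (N : ZMod M) * Q - S2 := by
    rw [hP, hQ, hS2, Finset.mul_sum, ← Finset.sum_sub_distrib]
    refine Finset.sum_congr rfl fun j hj => ?_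
    have hx := hxinv j hj
    have hy := hyinv j hj
    have hxy : (j:ZMod M) + ((N - j : ℕ):ZMod M) = (N:ZMod M) := by
      rw [hpair j hj]; ring
    linear_combination (((j:ZMod M))⁻¹^2 * (((N - j:ℕ):ZMod M))⁻¹) * hxy
      - (((j:ZMod M))⁻¹ * (((N - j:ℕ):ZMod M))⁻¹) * hx - (((j:ZMod M))⁻¹^2) * hy
  -- expansion
  have hc3 : (2 * (N : ZMod M))^3 = 0 := by
    have : (2 * (N : ZMod M))^3 = 8 * ((N:ZMod M))^3 := by ring
    rw [this, hN3, mul_zero]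
  obtain ⟨E, hE1, hE2⟩ := expand (2 * (N : ZMod M)) hc3 J (fun j => ((j : ZMod M))⁻¹)
  set B := ∏ j ∈ J, ((j : ZMod M)) with hB
  have hAcast : (∏ j ∈ J, (2 * (N : ZMod M) + (j : ZMod M)))
      = B * ∏ j ∈ J, (1 + (2 * (N : ZMod M)) * ((j : ZMod M))⁻¹) := by
    rw [hB, ← Finset.prod_mul_distrib]
    refine Finset.prod_congr rfl fun j hj => ?_
    have hx := hxinv j hj
    linear_combination (-(2*(N:ZMod M))) * hx
  -- assemble A = B * (1 - 3 N² S2)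
  have hcS1 : (2 * (N : ZMod M)) * S1 = -(((N:ZMod M))^2 * S2) := by
    linear_combination (N:ZMod M) * h2S1 + ((N:ZMod M))^2 * hPQ + Q * hN3
  have hc2E : (2 * (N : ZMod M))^2 * E = -(2*((N:ZMod M))^2 * S2) := by
    linear_combination (2*((N:ZMod M))^2) * hE2 + (((N:ZMod M))^2*S1) * h2S1 + (S1*P) * hN3
  have hAval : (∏ j ∈ J, (2 * (N : ZMod M) + (j : ZMod M))) = B * (1 - 3*((N:ZMod M))^2 * S2) := by
    rw [hAcast, hE1]
    linear_combination B * hcS1 + B * hc2E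
  -- key natural identity, cast
  have hIco : (Ico 1 N).filter (fun j => ¬ p ∣ j) = J := by
    rw [hJ]
    ext j
    simp only [mem_filter, mem_Ico, mem_range]
    constructor
    · rintro ⟨⟨h1, h2⟩, h3⟩; exact ⟨h2, h3⟩
    · rintro ⟨h2, h3⟩
      refine ⟨⟨?_, h2⟩, h3⟩
      rcases Nat.eq_zero_or_pos j with rfl | h
      · exact absurd (dvd_zero p) h3
      · omega
  have hkeyN : Nat.choose (3*N-1) (N-1) * ∏ j ∈ J, j
      = Nat.choose (3*n-1) (n-1) * ∏ j ∈ J, (2*N + j) := by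
    have := keyNat p n (by omega) hn0
    rw [← hNpn] at this
    rwa [hIco] at this
  have hkeyR : ((Nat.choose (3*N-1) (N-1) : ℕ) : ZMod M) * B
      = ((Nat.choose (3*n-1) (n-1) : ℕ) : ZMod M) * ∏ j ∈ J, (2 * (N : ZMod M) + (j : ZMod M)) := by
    have := congrArg (fun t : ℕ => (t : ZMod M)) hkeyN
    push_cast at this
    rw [hB]
    exact this
  have hBu : IsUnit B := by
    rw [hB]
    refine Finset.prod_induction _ IsUnit (fun a b ha hb => ha.mul hb) isUnit_one ?_
    intro j hj
    exact hunit j (hmem j hj).2.2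
  have hcancel : ((Nat.choose (3*N-1) (N-1) : ℕ) : ZMod M)
      = ((Nat.choose (3*n-1) (n-1) : ℕ) : ZMod M) * (1 - 3*((N:ZMod M))^2 * S2) := by
    refine hBu.mul_right_cancel ?_
    rw [hkeyR, hAval]
    ring
  -- the kill step
  have hdvdκ : (p^κ : ℕ) ∣ M := by rw [hM]; exact dvd_mul_left _ _
  set φ := ZMod.castHom hdvdκ (ZMod (p^κ)) with hφdef
  set x := 3 * ((e^2 : ℕ) : ZMod M) * S2 * ((Nat.choose (3*n-1) (n-1) : ℕ) : ZMod M) with hx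
  have hφx : φ x = 0 := by
    rcases Nat.eq_zero_or_pos κ with rfl | hκ1
    · haveI : Subsingleton (ZMod (p^0)) := inferInstanceAs (Subsingleton (ZMod 1))
      exact Subsingleton.elim _ _
    -- κ ≥ 1
    have hφS2 : φ S2 = ((p^(k-κ)*e : ℕ) : ZMod (p^κ)) *
        ∑ u : (ZMod (p^κ))ˣ, ((u : ZMod (p^κ)))^2 := by
      have hmap : φ S2 = ∑ j ∈ J, (((j : ZMod (p^κ)))⁻¹)^2 := by
        rw [hS2, map_sum]
        refine Finset.sum_congr rfl fun j hj => ?_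
        rw [map_pow]
        congr 1
        exact hom_inv φ j (hunit j (hmem j hj).2.2) (isUnit_cast hp κ j (hmem j hj).2.2)
      have hNfact : N = (p^(k-κ)*e) * p^κ := by
        rw [hNdef, mul_right_comm, ← pow_add, Nat.sub_add_cancel hκ]
      have hdp : p ∣ p^κ := dvd_pow_self p (by omega)
      have hper : ∀ j : ℕ, (fun j => if ¬ p ∣ j then (((j : ZMod (p^κ)))⁻¹)^2 else 0) (j + p^κ)
          = (fun j => if ¬ p ∣ j then (((j : ZMod (p^κ)))⁻¹)^2 else 0) j := by
        intro j
        have hiff : (p ∣ j + p^κ) ↔ p ∣ j := by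
          constructor
          · intro h
            have := Nat.dvd_sub h hdp
            simpa using this
          · intro h; exact Nat.dvd_add h hdp
        have hcast : ((j + p^κ : ℕ) : ZMod (p^κ)) = ((j : ℕ) : ZMod (p^κ)) := by
          rw [Nat.cast_add, ZMod.natCast_self, add_zero]
        by_cases hj : p ∣ j
        · simp only [hiff, hj, not_true, if_false]
        · simp only [hiff, hj, not_false_iff, if_true, hcast]
      calc φ S2 = ∑ j ∈ J, (((j : ZMod (p^κ)))⁻¹)^2 := hmap
        _ = ∑ j ∈ range N, (if ¬ p ∣ j then (((j : ZMod (p^κ)))⁻¹)^2 else 0) := by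
            rw [hJ, Finset.sum_filter]
        _ = (p^(k-κ)*e) • ∑ j ∈ range (p^κ), (if ¬ p ∣ j then (((j : ZMod (p^κ)))⁻¹)^2 else 0) := by
            rw [hNfact]
            exact periodic_sum (p^κ)
              (fun j => if ¬ p ∣ j then (((j : ZMod (p^κ)))⁻¹)^2 else 0) hper (p^(k-κ)*e)
        _ = (p^(k-κ)*e) • ∑ v ∈ (range (p^κ)).filter (fun v => ¬ p ∣ v), (((v : ZMod (p^κ)))⁻¹)^2 := by
            rw [Finset.sum_filter]
        _ = (p^(k-κ)*e) • ∑ u : (ZMod (p^κ))ˣ, (((u : ZMod (p^κ)))⁻¹)^2 := by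
            rw [sum_units_eq hp hκ1 (fun x => (x⁻¹)^2)]
        _ = (p^(k-κ)*e) • ∑ u : (ZMod (p^κ))ˣ, ((u : ZMod (p^κ)))^2 := by
            congr 1
            refine (Fintype.sum_bijective (fun u => u⁻¹) (Equiv.inv _).bijective _ _ fun u => ?_).symm
            rw [ZMod.inv_coe_unit, inv_inv]
        _ = ((p^(k-κ)*e : ℕ) : ZMod (p^κ)) * ∑ u : (ZMod (p^κ))ˣ, ((u : ZMod (p^κ)))^2 := by
            rw [nsmul_eq_mul]
    rw [hx, map_mul, map_mul, map_mul, map_natCast, map_natCast, hφS2]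
    push_cast at hV ⊢
    have h3 : φ 3 = 3 := by exact map_ofNat φ 3
    rw [h3]
    linear_combination ((e:ZMod (p^κ))^2 * ((Nat.choose (3*n-1) (n-1) : ℕ) : ZMod (p^κ))) * hV
  -- from hφx : the element p^(2k) * x = 0 in ZMod M
  have hvdvd : (p^κ : ℕ) ∣ x.val := by
    have : ((x.val : ℕ) : ZMod (p^κ)) = 0 := by
      rw [ZMod.natCast_val, ← ZMod.castHom_apply (h := hdvdκ), ← hφdef, hφx]
    exact (ZMod.natCast_eq_zero_iff _ _).mp this
  have hux : ((p^(2*k) : ℕ) : ZMod M) * x = 0 := by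
    have hxval : ((x.val : ℕ) : ZMod M) = x := ZMod.natCast_rightInverse x
    calc ((p^(2*k) : ℕ) : ZMod M) * x = ((p^(2*k) * x.val : ℕ) : ZMod M) := by
          push_cast
          rw [hxval]
      _ = 0 := by
          rw [ZMod.natCast_eq_zero_iff]
          exact dvd_trans (dvd_of_eq hM) (mul_dvd_mul_left _ hvdvd)
  -- N² = p^(2k) e²
  have hNsq : ((N : ZMod M))^2 = ((p^(2*k) : ℕ) : ZMod M) * ((e^2 : ℕ) : ZMod M) := by
    have hnat : (N:ℕ)^2 = p^(2*k) * e^2 := by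
      rw [hNdef, mul_pow, ← pow_mul, mul_comm k 2]
    calc ((N : ZMod M))^2 = ((N^2 : ℕ) : ZMod M) := by push_cast; ring
      _ = _ := by rw [hnat]; push_cast; ring
  have hkill : ((Nat.choose (3*n-1) (n-1) : ℕ) : ZMod M) * (3*((N : ZMod M))^2*S2) = 0 := by
    have : ((Nat.choose (3*n-1) (n-1) : ℕ) : ZMod M) * (3*((N : ZMod M))^2*S2)
        = ((p^(2*k) : ℕ) : ZMod M) * x := by
      rw [hNsq, hx]; ring
    rw [this, hux]
  have hCC : ((Nat.choose (3*N-1) (N-1) : ℕ) : ZMod M)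
      - ((Nat.choose (3*n-1) (n-1) : ℕ) : ZMod M) = 0 := by
    linear_combination hcancel - hkill
  have hint : (((Nat.choose (3*N-1) (N-1) : ℤ) - (Nat.choose (3*n-1) (n-1) : ℤ) : ℤ) : ZMod M) = 0 := by
    push_cast
    push_cast at hCC
    linear_combination hCC
  have hdvd := (ZMod.intCast_zmod_eq_zero_iff_dvd _ M).mp hint
  rwa [show ((M:ℕ):ℤ) = (p:ℤ)^(2*k)*(p:ℤ)^κ by rw [hM]; push_cast; ring] at hdvd
end XX

section YY

lemma step (p k e : ℕ) (hp : p.Prime) (hk : 1 ≤ k) (he : 0 < e) :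
    (p:ℤ)^(3*k) ∣ 2 * ((Nat.choose (3*(p^k*e)-1) (p^k*e-1) : ℤ)
      - (Nat.choose (3*(p^(k-1)*e)-1) (p^(k-1)*e-1) : ℤ)) := by
  by_cases hp2 : p = 2
  · subst hp2
    haveI : NeZero ((2:ℕ)^(k-1)) := ⟨pow_ne_zero _ two_ne_zero⟩
    have hV : ((3 * (2^(k-(k-1)) * e) : ℕ) : ZMod (2^(k-1))) *
        (∑ u : (ZMod (2^(k-1)))ˣ, ((u : ZMod (2^(k-1))))^2) = 0 := by
      rw [show k - (k-1) = 1 by omega]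
      push_cast
      linear_combination (3 * (e : ZMod (2^(k-1)))) * V_two (k-1)
    have hcore := core (p := 2) (κ := k-1) hp hk he (by omega) hV
    have h2 : ((2:ℤ)^(3*k)) = 2 * ((2:ℤ)^(2*k) * (2:ℤ)^(k-1)) := by
      rw [← pow_add, ← pow_succ']
      congr 1
      omega
    push_cast at hcore ⊢
    rw [h2]
    exact mul_dvd_mul_left 2 hcore
  · haveI : NeZero (p^k) := ⟨pow_ne_zero _ hp.ne_zero⟩
    have hV : ((3 * (p^(k-k) * e) : ℕ) : ZMod (p^k)) *
        (∑ u : (ZMod (p^k))ˣ, ((u : ZMod (p^k)))^2) = 0 := by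
      rw [Nat.sub_self, pow_zero]
      push_cast
      linear_combination (e : ZMod (p^k)) * V_odd (p := p) (t := k) hp hp2
    have hcore := core (p := p) (κ := k) hp hk he le_rfl hV
    have h3 : ((p:ℤ)^(3*k)) = (p:ℤ)^(2*k) * (p:ℤ)^k := by
      rw [← pow_add]
      congr 1
      omega
    rw [h3]
    exact Dvd.dvd.mul_left hcore 2

lemma sum_divisors_coprime {u v : ℕ} (huv : Nat.Coprime u v) (hu : u ≠ 0) (hv : v ≠ 0)
    (f : ℕ → ℤ) :
    ∑ d ∈ (u*v).divisors, f d = ∑ a ∈ u.divisors, ∑ b ∈ v.divisors, f (a*b) := by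
  rw [← Finset.sum_product']
  refine Finset.sum_nbij' (fun d => (Nat.gcd d u, Nat.gcd d v)) (fun ab => ab.1 * ab.2)
    ?_ ?_ ?_ ?_ ?_
  · intro d hd
    rw [Nat.mem_divisors] at hd
    simp only [Finset.mem_product, Nat.mem_divisors]
    exact ⟨⟨Nat.gcd_dvd_right d u, hu⟩, ⟨Nat.gcd_dvd_right d v, hv⟩⟩
  · intro ab hab
    simp only [Finset.mem_product, Nat.mem_divisors] at hab
    rw [Nat.mem_divisors]
    exact ⟨mul_dvd_mul hab.1.1 hab.2.1, mul_ne_zero hu hv⟩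
  · intro d hd
    rw [Nat.mem_divisors] at hd
    exact (Nat.gcd_mul_gcd_eq_iff_dvd_mul_of_coprime huv).mpr hd.1
  · intro ab hab
    simp only [Finset.mem_product, Nat.mem_divisors] at hab
    obtain ⟨⟨ha, _⟩, ⟨hb, _⟩⟩ := hab
    have h1 : Nat.gcd (ab.1 * ab.2) u = ab.1 := by
      refine Nat.dvd_antisymm ?_ (Nat.dvd_gcd (dvd_mul_right _ _) ha)
      have hg1 : Nat.gcd (ab.1 * ab.2) u ∣ ab.1 * ab.2 := Nat.gcd_dvd_left _ _
      have hg2 : Nat.gcd (ab.1 * ab.2) u ∣ u := Nat.gcd_dvd_right _ _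
      have hcop : Nat.Coprime (Nat.gcd (ab.1 * ab.2) u) ab.2 :=
        Nat.Coprime.coprime_dvd_right hb (Nat.Coprime.coprime_dvd_left hg2 huv)
      exact hcop.dvd_of_dvd_mul_right hg1
    have h2 : Nat.gcd (ab.1 * ab.2) v = ab.2 := by
      refine Nat.dvd_antisymm ?_ (Nat.dvd_gcd (dvd_mul_left _ _) hb)
      have hg1 : Nat.gcd (ab.1 * ab.2) v ∣ ab.1 * ab.2 := Nat.gcd_dvd_left _ _
      have hg2 : Nat.gcd (ab.1 * ab.2) v ∣ v := Nat.gcd_dvd_right _ _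
      have hcop : Nat.Coprime (Nat.gcd (ab.1 * ab.2) v) ab.1 :=
        Nat.Coprime.coprime_dvd_right ha (Nat.Coprime.coprime_dvd_left hg2 huv.symm)
      exact hcop.dvd_of_dvd_mul_left hg1
    exact Prod.ext h1 h2
  · intro d hd
    rw [Nat.mem_divisors] at hd
    rw [(Nat.gcd_mul_gcd_eq_iff_dvd_mul_of_coprime huv).mpr hd.1]

end YY

section ZZ

open ArithmeticFunction

lemma divisor_split (p k m : ℕ) (hp : p.Prime) (hk : 1 ≤ k) (hm : m ≠ 0) (hpm : ¬ p ∣ m) :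
    ∑ d ∈ (p^k*m).divisors, (moebius ((p^k*m) / d) : ℤ) * (Nat.choose (3*d-1) (d-1) : ℤ)
      = ∑ b ∈ m.divisors, (moebius (m / b) : ℤ) *
          ((Nat.choose (3*(p^k*b)-1) (p^k*b-1) : ℤ) - (Nat.choose (3*(p^(k-1)*b)-1) (p^(k-1)*b-1) : ℤ)) := by
  have hpk0 : (p:ℕ)^k ≠ 0 := pow_ne_zero _ hp.ne_zero
  have hcop : Nat.Coprime (p^k) m := Nat.Coprime.pow_left k (hp.coprime_iff_not_dvd.mpr hpm)
  rw [sum_divisors_coprime hcop hpk0 hm]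
  rw [Nat.sum_divisors_prime_pow hp]
  have hq : ∀ i, i ≤ k → ∀ b ∈ m.divisors, (p^k*m) / (p^i*b) = p^(k-i)*(m/b) := by
    intro i hi b hb
    rw [Nat.mem_divisors] at hb
    have hb0 : 0 < b := Nat.pos_of_dvd_of_pos hb.1 (Nat.pos_of_ne_zero hm)
    have heq : p^k*m = (p^i*b) * (p^(k-i)*(m/b)) := by
      rw [show (p^i*b) * (p^(k-i)*(m/b)) = (p^i*p^(k-i))*(b*(m/b)) by ring,
        ← pow_add, Nat.add_sub_cancel' hi, Nat.mul_div_cancel' hb.1]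
    rw [heq, Nat.mul_div_cancel_left _ (Nat.mul_pos (pow_pos hp.pos i) hb0)]
  have hmb : ∀ b ∈ m.divisors, (m/b) ∣ m := by
    intro b hb
    rw [Nat.mem_divisors] at hb
    exact Nat.div_dvd_of_dvd hb.1
  have hstep : ∀ i ∈ Finset.range (k+1),
      (∑ b ∈ m.divisors, (moebius ((p^k*m) / (p^i*b)) : ℤ) * (Nat.choose (3*(p^i*b)-1) (p^i*b-1) : ℤ))
      = ∑ b ∈ m.divisors, ((moebius (p^(k-i)) : ℤ) * (moebius (m/b) : ℤ))
          * (Nat.choose (3*(p^i*b)-1) (p^i*b-1) : ℤ) := by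
    intro i hi
    rw [Finset.mem_range] at hi
    refine Finset.sum_congr rfl fun b hb => ?_
    rw [hq i (by omega) b hb]
    congr 1
    have hcop2 : Nat.Coprime (p^(k-i)) (m/b) :=
      Nat.Coprime.coprime_dvd_right (hmb b hb)
        (Nat.Coprime.coprime_dvd_left (pow_dvd_pow p (Nat.sub_le k i)) hcop)
    exact isMultiplicative_moebius.map_mul_of_coprime hcop2
  rw [Finset.sum_congr rfl hstep]
  have hsub : ({k-1, k} : Finset ℕ) ⊆ Finset.range (k+1) := by
    intro i hi
    simp only [Finset.mem_insert, Finset.mem_singleton] at hi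
    rw [Finset.mem_range]
    omega
  rw [← Finset.sum_subset hsub ?hvanish]
  case hvanish =>
    intro i hi hni
    simp only [Finset.mem_insert, Finset.mem_singleton, not_or] at hni
    rw [Finset.mem_range] at hi
    have h2 : k - i ≠ 0 ∧ k - i ≠ 1 := by omega
    rw [moebius_apply_prime_pow hp h2.1, if_neg h2.2]
    push_cast
    simp
  rw [Finset.sum_pair (by omega : k - 1 ≠ k)]
  have e1 : moebius (p^(k-(k-1))) = -1 := by
    rw [show k - (k-1) = 1 by omega, pow_one, moebius_apply_prime hp]
  have e2 : moebius (p^(k-k)) = 1 := by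
    rw [Nat.sub_self, pow_zero, ArithmeticFunction.moebius_apply_one]
  rw [e1, e2, ← Finset.sum_add_distrib]
  refine Finset.sum_congr rfl fun b hb => ?_
  push_cast
  ring

end ZZ

open ArithmeticFunction in
theorem stmt_1 (r : ℕ) (hr : 0 < r) :
    ((r : ℤ))^3 ∣ 2 * ∑ d ∈ r.divisors, moebius (r / d) * (Nat.choose (3*d - 1) (d - 1) : ℤ) := by
  have hmain : ∀ p j : ℕ, Nat.Prime p → p^j ∣ r^3 →
      (p:ℤ)^j ∣ 2 * ∑ d ∈ r.divisors, moebius (r / d) * (Nat.choose (3*d - 1) (d - 1) : ℤ) := by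
    intro p j hp hdvd
    set k := r.factorization p with hkdef
    have hj : j ≤ 3 * k := by
      have h1 := (Nat.Prime.pow_dvd_iff_le_factorization hp (pow_ne_zero 3 hr.ne')).mp hdvd
      rwa [Nat.factorization_pow, Finsupp.smul_apply, smul_eq_mul] at h1
    refine dvd_trans (pow_dvd_pow (p:ℤ) hj) ?_
    rcases Nat.eq_zero_or_pos k with hk0 | hk1
    · rw [hk0, mul_zero, pow_zero]; exact one_dvd _
    set m := r / p^k with hmdef
    have hrm : r = p^k * m := (Nat.ordProj_mul_ordCompl_eq_self r p).symm
    have hm : m ≠ 0 := by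
      intro h
      rw [h, mul_zero] at hrm
      omega
    have hpm : ¬ p ∣ m := Nat.not_dvd_ordCompl hp hr.ne'
    rw [show r = p^k * m from hrm, divisor_split p k m hp hk1 hm hpm, Finset.mul_sum]
    refine Finset.dvd_sum fun b hb => ?_
    have hb0 : 0 < b := Nat.pos_of_mem_divisors hb
    have hstep := step p k b hp hk1 hb0
    calc (p:ℤ)^(3*k) ∣ 2 * ((Nat.choose (3*(p^k*b)-1) (p^k*b-1) : ℤ)
          - (Nat.choose (3*(p^(k-1)*b)-1) (p^(k-1)*b-1) : ℤ)) := hstep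
      _ ∣ 2 * ((moebius (m / b) : ℤ) *
          ((Nat.choose (3*(p^k*b)-1) (p^k*b-1) : ℤ)
            - (Nat.choose (3*(p^(k-1)*b)-1) (p^(k-1)*b-1) : ℤ))) := by
          exact ⟨(moebius (m / b) : ℤ), by ring⟩
  -- conclude
  set T := 2 * ∑ d ∈ r.divisors, moebius (r / d) * (Nat.choose (3*d - 1) (d - 1) : ℤ) with hT
  have hnat : r^3 ∣ T.natAbs := by
    rw [Nat.dvd_iff_prime_pow_dvd_dvd]
    intro p j hp hpj
    have hp' : Nat.Prime p := by first | exact hp | exact Nat.prime_iff.mpr hp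
    have := hmain p j hp' hpj
    have h2 : ((p^j : ℕ) : ℤ) ∣ T := by push_cast; exact this
    have h3 := Int.natAbs_dvd_natAbs.mpr h2
    rwa [Int.natAbs_natCast] at h3
  have h4 : ((r^3 : ℕ) : ℤ) ∣ T := Int.dvd_natAbs.mp (Int.natCast_dvd_natCast.mpr hnat)
  push_cast at h4
  exact h4
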